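/- If F is a bounded continuous function on the closed strip S = {z ∈ ℂ : 0 ≤ Im z ≤ 1}, analytic in the interior of S, and satisfies F(t) = F(t + i) for all real t, then F is constant on S. -/

import Mathlib

open Complex

/-- The closed strip `S = {z : 0 ≤ Im z ≤ 1}`. -/
def Strip : Set ℂ := {z | 0 ≤ z.im ∧ z.im ≤ 1}

/-- `F` belongs to `A(S)`: bounded and continuous on the closed strip,
holomorphic in its interior. -/
structure MemAS (F : ℂ → ℂ) : Prop where
  cont : ContinuousOn F Strip
  diff : DifferentiableOn ℂ F {z : ℂ | 0 < z.im ∧ z.im < 1}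
  bdd : ∃ C : ℝ, ∀ z ∈ Strip, ‖F z‖ ≤ C

open Real Set MeasureTheory intervalIntegral Filter

namespace Stmt0Aux

variable {F : ℂ → ℂ}

/-- the auxiliary function `g n z = F z · exp(2πn z)`. -/
noncomputable def gAux (F : ℂ → ℂ) (n : ℤ) (z : ℂ) : ℂ :=
  F z * Complex.exp (((2 * Real.pi * n : ℝ) : ℂ) * z)

/-- `φ n x = ∫_0^1 g n (x+iy) dy`. -/
noncomputable def phiAux (F : ℂ → ℂ) (n : ℤ) (x : ℝ) : ℂ :=
  ∫ y in (0:ℝ)..1, gAux F n ((x : ℂ) + y * Complex.I)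

lemma mem_strip (x y : ℝ) (h0 : 0 ≤ y) (h1 : y ≤ 1) : ((x : ℂ) + y * Complex.I) ∈ Strip := by
  simp [Strip, h0, h1]

lemma gAux_periodic (hper : ∀ t : ℝ, F (t : ℂ) = F ((t : ℂ) + Complex.I)) (n : ℤ) (x : ℝ) :
    gAux F n (x) = gAux F n (x + Complex.I) := by
  have h1 : (((2 * Real.pi * n : ℝ) : ℂ) * ((x : ℂ) + Complex.I))
      = ((2 * Real.pi * n : ℝ) : ℂ) * x + (n : ℂ) * (2 * Real.pi * Complex.I) := by
    push_cast; ring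
  rw [gAux, gAux, ← hper x, h1, Complex.exp_add, Complex.exp_int_mul_two_pi_mul_I]
  ring

lemma gAux_contOn (hF : MemAS F) (n : ℤ) : ContinuousOn (gAux F n) Strip :=
  hF.cont.mul (Complex.continuous_exp.comp (continuous_const.mul continuous_id)).continuousOn

lemma gAux_diffOn (hF : MemAS F) (n : ℤ) :
    DifferentiableOn ℂ (gAux F n) {z : ℂ | 0 < z.im ∧ z.im < 1} :=
  hF.diff.mul ((Complex.differentiable_exp.comp (differentiable_id.const_mul _)).differentiableOn)

/-- The rectangle (Cauchy–Goursat) argument: `φ n` is constant. -/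
lemma phiAux_const (hF : MemAS F) (hper : ∀ t : ℝ, F (t : ℂ) = F ((t : ℂ) + Complex.I))
    (n : ℤ) (a b : ℝ) : phiAux F n a = phiAux F n b := by
  have Hc := gAux_contOn hF n
  have Hd := gAux_diffOn hF n
  have key := Complex.integral_boundary_rect_eq_zero_of_continuousOn_of_differentiableOn
    (gAux F n) (a : ℂ) ((b : ℂ) + Complex.I) ?_ ?_
  · simp only [Complex.add_im, Complex.ofReal_im, Complex.I_im, Complex.add_re, Complex.I_re,
      Complex.ofReal_re, zero_add, add_zero] at key
    have h1 : (∫ x : ℝ in a..b, gAux F n ((x : ℂ) + (0 : ℝ) * Complex.I))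
        = ∫ x : ℝ in a..b, gAux F n ((x : ℂ) + (1 : ℝ) * Complex.I) := by
      refine intervalIntegral.integral_congr fun x _ => ?_
      simpa using gAux_periodic hper n x
    rw [h1, sub_self, zero_add, ← smul_sub, smul_eq_zero] at key
    rcases key with h | h
    · exact absurd h Complex.I_ne_zero
    · exact (sub_eq_zero.mp h).symm
  · refine Hc.mono fun z hz => ?_
    rw [Complex.mem_reProdIm] at hz
    have := hz.2
    simp only [Complex.ofReal_im, Complex.add_im, Complex.I_im, zero_add] at this
    rw [uIcc_of_le zero_le_one] at this
    exact ⟨this.1, this.2⟩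
  · refine Hd.mono fun z hz => ?_
    rw [Complex.mem_reProdIm] at hz
    have := hz.2
    simp only [Complex.ofReal_im, Complex.add_im, Complex.I_im, zero_add] at this
    rw [min_eq_left zero_le_one, max_eq_right zero_le_one] at this
    exact ⟨this.1, this.2⟩

lemma phiAux_bound {C : ℝ} (hC : ∀ z ∈ Strip, ‖F z‖ ≤ C) (n : ℤ) (x : ℝ) :
    ‖phiAux F n x‖ ≤ C * Real.exp (2 * Real.pi * n * x) := by
  have := intervalIntegral.norm_integral_le_of_norm_le_const
    (C := C * Real.exp (2 * Real.pi * n * x))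
    (f := fun y : ℝ => gAux F n ((x:ℂ) + y * Complex.I)) (a := 0) (b := 1) ?_
  · simpa [phiAux] using this
  · intro y hy
    rw [uIoc_of_le zero_le_one] at hy
    simp only [gAux, norm_mul]
    have h1 : ‖F ((x:ℂ) + y * Complex.I)‖ ≤ C :=
      hC _ (mem_strip x y (le_of_lt hy.1) hy.2)
    have h2 : ‖Complex.exp (((2 * Real.pi * n : ℝ) : ℂ) * ((x:ℂ) + y * Complex.I))‖
        = Real.exp (2 * Real.pi * n * x) := by
      rw [Complex.norm_exp]; congr 1; simp [Complex.mul_re]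
    rw [h2]
    exact mul_le_mul_of_nonneg_right h1 (Real.exp_pos _).le

lemma phiAux_vanish (hF : MemAS F) (hper : ∀ t : ℝ, F (t : ℂ) = F ((t : ℂ) + Complex.I))
    {C : ℝ} (hC : ∀ z ∈ Strip, ‖F z‖ ≤ C) {n : ℤ} (hn : n ≠ 0) (x : ℝ) :
    phiAux F n x = 0 := by
  have hconst : ∀ t : ℝ, ‖phiAux F n x‖ ≤ C * Real.exp (2 * Real.pi * n * t) := fun t => by
    rw [phiAux_const hF hper n x t]; exact phiAux_bound hC n t
  have hnorm : ‖phiAux F n x‖ ≤ 0 := by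
    rcases hn.lt_or_gt with hneg | hpos
    · -- n < 0 : let t → +∞
      have hc : (2 * Real.pi * n : ℝ) < 0 := by
        have : (n : ℝ) < 0 := by exact_mod_cast hneg
        nlinarith [Real.pi_pos]
      have hlim : Tendsto (fun t => C * Real.exp (2 * Real.pi * n * t)) atTop (nhds 0) := by
        have h := Real.tendsto_exp_atBot.comp ((tendsto_const_mul_atBot_of_neg hc).2 tendsto_id)
        simpa using h.const_mul C
      exact ge_of_tendsto hlim (Eventually.of_forall hconst)
    · -- 0 < n : let t → -∞
      have hc : (0:ℝ) < 2 * Real.pi * n := by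
        have : (0:ℝ) < (n : ℝ) := by exact_mod_cast hpos
        nlinarith [Real.pi_pos]
      have hlim : Tendsto (fun t => C * Real.exp (2 * Real.pi * n * t)) atBot (nhds 0) := by
        have h := Real.tendsto_exp_atBot.comp ((tendsto_const_mul_atBot_of_pos hc).2 tendsto_id)
        simpa using h.const_mul C
      exact ge_of_tendsto hlim (Eventually.of_forall hconst)
  exact norm_le_zero_iff.mp hnorm

lemma F_integrable (hF : MemAS F) (x : ℝ) :
    IntervalIntegrable (fun y : ℝ => F ((x:ℂ) + y * Complex.I)) volume 0 1 := by
  apply ContinuousOn.intervalIntegrable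
  rw [uIcc_of_le zero_le_one]
  exact hF.cont.comp (Continuous.continuousOn (by continuity))
    (fun y hy => mem_strip x y hy.1 hy.2)

/-- Vanishing of nonzero Fourier coefficients along vertical lines. -/
lemma inner_vanish (hF : MemAS F) (hper : ∀ t : ℝ, F (t : ℂ) = F ((t : ℂ) + Complex.I))
    {C : ℝ} (hC : ∀ z ∈ Strip, ‖F z‖ ≤ C) {n : ℤ} (hn : n ≠ 0) (x : ℝ) :
    (∫ y in (0:ℝ)..1, Complex.exp (2 * Real.pi * Complex.I * n * y)
        * F ((x:ℂ) + y * Complex.I)) = 0 := by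
  have h0 : phiAux F n x
      = Complex.exp ((2 * Real.pi * n * x : ℝ))
        * ∫ y in (0:ℝ)..1, Complex.exp (2 * Real.pi * Complex.I * n * y)
            * F ((x:ℂ) + y * Complex.I) := by
    rw [phiAux, ← intervalIntegral.integral_const_mul]
    refine intervalIntegral.integral_congr fun y _ => ?_
    rw [gAux]
    have he : (((2 * Real.pi * n : ℝ) : ℂ) * ((x:ℂ) + y * Complex.I))
        = ((2 * Real.pi * n * x : ℝ) : ℂ) + 2 * Real.pi * Complex.I * n * y := by
      push_cast; ring
    rw [he, Complex.exp_add]; ring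
  have := phiAux_vanish hF hper hC hn x
  rw [h0] at this
  rcases mul_eq_zero.mp this with h | h
  · exact absurd h (Complex.exp_ne_zero _)
  · exact h

end Stmt0Aux

namespace Stmt0Aux

lemma fourier_unique {u : AddCircle (1:ℝ) → ℂ} (hu : Continuous u)
    (h : ∀ m : ℤ, @fourierCoeff (1:ℝ) ⟨one_pos⟩ _ _ _ u m = 0) : ∀ q, u q = 0 := by
  haveI : Fact (0 < (1:ℝ)) := ⟨one_pos⟩
  have hmem : MemLp u 2 (@AddCircle.haarAddCircle (1:ℝ) _) :=
    hu.memLp_of_hasCompactSupport (isClosed_tsupport _).isCompact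
  set U : Lp ℂ 2 (@AddCircle.haarAddCircle (1:ℝ) _) := hmem.toLp u with hU
  have hae : (U : AddCircle (1:ℝ) → ℂ) =ᵐ[AddCircle.haarAddCircle] u := hmem.coeFn_toLp
  have hcoeff : ∀ m : ℤ, fourierCoeff (U : AddCircle (1:ℝ) → ℂ) m = 0 := by
    intro m
    rw [← h m]
    unfold fourierCoeff
    exact integral_congr_ae (hae.mono fun q hq => by simp only [hq])
  have hrepr : fourierBasis.repr U = 0 := by
    ext m
    rw [fourierBasis_repr U m, hcoeff m]
    rfl
  have hU0 : U = 0 := by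
    rwa [LinearIsometryEquiv.map_eq_zero_iff] at hrepr
  have hz : u =ᵐ[AddCircle.haarAddCircle] (fun _ => (0:ℂ)) := by
    refine (hae.symm.trans ?_)
    rw [hU0]
    exact Lp.coeFn_zero ℂ 2 _
  have := (hu.ae_eq_iff_eq AddCircle.haarAddCircle continuous_const).mp hz
  intro q; rw [this]

lemma exp_integrable (x : ℝ) (w : ℂ) (hF : MemAS F) :
    IntervalIntegrable
      (fun y : ℝ => Complex.exp (w * y) * F ((x:ℂ) + y * Complex.I)) volume 0 1 := by
  apply ContinuousOn.intervalIntegrable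
  rw [uIcc_of_le zero_le_one]
  exact ((Complex.continuous_exp.comp (continuous_const.mul Complex.continuous_ofReal))
    |>.continuousOn).mul
    (hF.cont.comp (Continuous.continuousOn (by continuity))
      (fun y hy => mem_strip x y hy.1 hy.2))

lemma value_const (hF : MemAS F) (hper : ∀ t : ℝ, F (t : ℂ) = F ((t : ℂ) + Complex.I))
    {C : ℝ} (hC : ∀ z ∈ Strip, ‖F z‖ ≤ C) (x : ℝ) {y : ℝ} (hy : y ∈ Ico (0:ℝ) 1) :
    F ((x:ℂ) + y * Complex.I) = phiAux F 0 0 := by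
  haveI : Fact (0 < (1:ℝ)) := ⟨one_pos⟩
  set c : ℂ := phiAux F 0 0 with hc
  set hfun : ℝ → ℂ := fun y : ℝ => F ((x:ℂ) + y * Complex.I) - c with hfun_def
  have hFi : IntervalIntegrable (fun y : ℝ => F ((x:ℂ) + y * Complex.I)) volume 0 1 :=
    F_integrable hF x
  -- all Fourier coefficients of `hfun` vanish
  have hcoeffOn : ∀ m : ℤ,
      fourierCoeffOn (lt_add_of_pos_right (0:ℝ) (zero_lt_one)) hfun m = 0 := by
    intro m
    rw [fourierCoeffOn_eq_integral]
    simp only [zero_add, sub_zero, div_one, one_smul, Complex.ofReal_one]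
    rcases eq_or_ne m 0 with rfl | hm
    · -- zeroth coefficient
      have h1 : (∫ y in (0:ℝ)..1, fourier (-(0:ℤ)) (y : AddCircle ((0:ℝ)+1-0)) • hfun y)
          = ∫ y in (0:ℝ)..1, (F ((x:ℂ) + y * Complex.I) - c) := by
        refine intervalIntegral.integral_congr fun y _ => ?_
        simp [hfun_def]
      rw [h1, intervalIntegral.integral_sub hFi intervalIntegrable_const]
      have h2 : (∫ y in (0:ℝ)..1, F ((x:ℂ) + y * Complex.I)) = c := by
        have := phiAux_const hF hper 0 x 0
        rw [hc, ← this, phiAux]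
        refine intervalIntegral.integral_congr fun y _ => ?_
        simp [gAux]
      rw [h2]
      simp
    · -- nonzero coefficients
      have hn : (-m : ℤ) ≠ 0 := neg_ne_zero.mpr hm
      have h1 : (∫ y in (0:ℝ)..1, fourier (-m) (y : AddCircle ((0:ℝ)+1-0)) • hfun y)
          = ∫ y in (0:ℝ)..1,
              (Complex.exp ((2 * Real.pi * Complex.I * (-m : ℤ)) * y)
                  * F ((x:ℂ) + y * Complex.I)
                - Complex.exp ((2 * Real.pi * Complex.I * (-m : ℤ)) * y) * c) := by
        refine intervalIntegral.integral_congr fun y _ => ?_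
        rw [fourier_coe_apply]
        simp only [hfun_def, smul_eq_mul]
        push_cast
        norm_num
        ring
      rw [h1, intervalIntegral.integral_sub (exp_integrable x _ hF)
        ((Continuous.intervalIntegrable (by fun_prop) 0 1 :
          IntervalIntegrable
            (fun y : ℝ => Complex.exp ((2 * Real.pi * Complex.I * (-m : ℤ)) * y) * c)
            volume 0 1))]
      have h2 : (∫ y in (0:ℝ)..1,
          Complex.exp ((2 * Real.pi * Complex.I * (-m : ℤ)) * y)
            * F ((x:ℂ) + y * Complex.I)) = 0 := by
        have := inner_vanish hF hper hC hn x
        rw [← this]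
      have hcne : (2 * (Real.pi:ℂ) * Complex.I * ((-m : ℤ):ℂ)) ≠ 0 := by
        apply mul_ne_zero
        apply mul_ne_zero
        apply mul_ne_zero two_ne_zero
        · exact Complex.ofReal_ne_zero.mpr Real.pi_ne_zero
        · exact Complex.I_ne_zero
        · exact_mod_cast hn
      have h3 : (∫ y in (0:ℝ)..1,
          Complex.exp ((2 * Real.pi * Complex.I * (-m : ℤ)) * y) * c)
          = (∫ y in (0:ℝ)..1, Complex.exp ((2 * Real.pi * Complex.I * (-m : ℤ)) * y)) * c := by
        rw [intervalIntegral.integral_mul_const]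
      rw [h2, h3, integral_exp_mul_complex hcne]
      have h4 : Complex.exp (2 * (Real.pi:ℂ) * Complex.I * ((-m : ℤ):ℂ) * (1:ℝ)) = 1 := by
        have := Complex.exp_int_mul_two_pi_mul_I (-m)
        rw [← this]
        congr 1
        push_cast
        ring
      have h5 : Complex.exp (2 * (Real.pi:ℂ) * Complex.I * ((-m : ℤ):ℂ) * (0:ℝ)) = 1 := by
        norm_num
      rw [h4, h5]
      simp
  -- lift to the circle
  have hfun_per : hfun 0 = hfun 1 := by
    simp only [hfun_def, Complex.ofReal_zero, Complex.ofReal_one, zero_mul, add_zero, one_mul]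
    rw [← hper x]
  have hfun_cont : ContinuousOn hfun (Icc 0 1) := by
    exact ((hF.cont.comp (Continuous.continuousOn (by continuity))
      (fun y hy => mem_strip x y hy.1 hy.2)).sub continuousOn_const)
  have hu : Continuous (AddCircle.liftIco 1 0 hfun) :=
    AddCircle.liftIco_zero_continuous hfun_per (by simpa using hfun_cont)
  have hcoeff : ∀ m : ℤ, fourierCoeff (AddCircle.liftIco 1 0 hfun) m = 0 := by
    intro m
    rw [fourierCoeff_liftIco_eq]
    exact hcoeffOn m
  have hzero := fourier_unique hu hcoeff
  have := hzero (y : AddCircle (1:ℝ))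
  rw [AddCircle.liftIco_zero_coe_apply hy] at this
  have : F ((x:ℂ) + y * Complex.I) - c = 0 := this
  exact sub_eq_zero.mp this
end Stmt0Aux

/-- a function in `A(S)` with `F(t) = F(t+i)` for all real `t`
is constant on the strip. -/
theorem stmt0 (F : ℂ → ℂ) (hF : MemAS F)
    (hper : ∀ t : ℝ, F (t : ℂ) = F ((t : ℂ) + Complex.I)) :
    ∀ z ∈ Strip, ∀ w ∈ Strip, F z = F w := by
  obtain ⟨C, hC⟩ := hF.bdd
  have hval : ∀ z ∈ Strip, F z = Stmt0Aux.phiAux F 0 0 := by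
    intro z hz
    rcases lt_or_eq_of_le hz.2 with hlt | heq
    · have := Stmt0Aux.value_const hF hper hC z.re (y := z.im) ⟨hz.1, hlt⟩
      rwa [Complex.re_add_im] at this
    · have hz1 : z = (z.re : ℂ) + Complex.I := by
        apply Complex.ext <;> simp [← heq]
      have h0 := Stmt0Aux.value_const hF hper hC z.re (y := 0) ⟨le_refl 0, zero_lt_one⟩
      rw [hz1, ← hper z.re]
      simpa using h0
  intro z hz w hw
  rw [hval z hz, hval w hw]
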